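/- Given c < ∞ colors, positive integers k₁,…,k_ν and N₁,…,N_ν, there exist positive integers R₁,…,R_ν such that for any pairwise disjoint finite sets A₁,…,A_ν with |A_i| = R_i, and any coloring with c colors of all tuples (B₁,…,B_ν) with B_i ⊆ A_i and |B_i| = k_i, there exist sets C_i ⊆ A_i with |C_i| = N_i such that all tuples (B₁,…,B_ν) with B_i ⊆ C_i receive the same color. -/

import Mathlib

/-- One-part finite hypergraph Ramsey theorem: for any number of colors `c`,
uniformity `k` and target size `N`, there is `R` such that any `c`-coloring of
the `k`-subsets of a set of size at least `R` admits a monochromatic subset of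
size `N`. -/
theorem ramsey_one : ∀ (k c N : ℕ), 0 < c →
    ∃ R : ℕ, ∀ (α : Type) (A : Finset α), R ≤ A.card →
      ∀ f : Finset α → Fin c,
        ∃ C : Finset α, C ⊆ A ∧ C.card = N ∧
          ∃ x : Fin c, ∀ B : Finset α, B ⊆ C → B.card = k → f B = x := by
  intro k
  induction k with
  | zero =>
    intro c N hc
    refine ⟨N, ?_⟩
    intro α A hA f
    obtain ⟨C, hCA, hCcard⟩ := Finset.exists_subset_card_eq hA
    exact ⟨C, hCA, hCcard, f ∅, fun B _ hB0 => by
      rw [Finset.card_eq_zero.mp hB0]⟩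
  | succ k ih =>
    intro c N hc
    classical
    have Rkspec : ∀ n : ℕ, ∀ (α : Type) (A : Finset α), (ih c n hc).choose ≤ A.card →
        ∀ f : Finset α → Fin c, ∃ C, C ⊆ A ∧ C.card = n ∧
          ∃ x, ∀ B, B ⊆ C → B.card = k → f B = x := fun n => (ih c n hc).choose_spec
    set Rk : ℕ → ℕ := fun n => (ih c n hc).choose with hRkdef
    let g : ℕ → ℕ := fun j => Nat.rec 0 (fun _ prev => Rk prev + 1) j
    have hg : ∀ j, g (j + 1) = Rk (g j) + 1 := fun _ => rfl
    refine ⟨g (c * (N - 1) + 1), ?_⟩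
    intro α A hA f
    letI : LinearOrder α := IsWellOrder.linearOrder WellOrderingRel
    have H : ∀ (j : ℕ) (S : Finset α), g j ≤ S.card →
        ∃ (D : Finset α) (col : α → Fin c), D ⊆ S ∧ D.card = j ∧
          ∀ a ∈ D, ∀ B ⊆ D, B.card = k → (∀ b ∈ B, a < b) →
            f (insert a B) = col a := by
      intro j
      induction j with
      | zero =>
        intro S _
        exact ⟨∅, fun _ => ⟨0, hc⟩, Finset.empty_subset _, Finset.card_empty, by simp⟩
      | succ j ihj =>
        intro S hS
        have hSpos : 0 < S.card := by
          have h1 := hg j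
          omega
        have hSne : S.Nonempty := Finset.card_pos.mp hSpos
        set a := S.min' hSne with ha
        have haS : a ∈ S := S.min'_mem hSne
        have hcard : Rk (g j) ≤ (S.erase a).card := by
          rw [Finset.card_erase_of_mem haS]
          have h1 := hg j
          omega
        obtain ⟨C1, hC1sub, hC1card, x, hx⟩ :=
          Rkspec (g j) α (S.erase a) hcard (fun B => f (insert a B))
        obtain ⟨D', col', hD'sub, hD'card, hkey⟩ := ihj C1 (le_of_eq hC1card.symm)
        refine ⟨insert a D', Function.update col' a x, ?_, ?_, ?_⟩
        · intro b hb
          rcases Finset.mem_insert.mp hb with rfl | hb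
          · exact haS
          · exact Finset.erase_subset _ _ (hC1sub (hD'sub hb))
        · rw [Finset.card_insert_of_notMem, hD'card]
          intro haD'
          exact (Finset.notMem_erase a S) (hC1sub (hD'sub haD'))
        · intro a' ha' B hB hBcard hBlt
          rcases Finset.mem_insert.mp ha' with rfl | ha'
          · have haB : a ∉ B := fun h => lt_irrefl a (hBlt a h)
            have hBD' : B ⊆ D' := fun b hb =>
              (Finset.mem_insert.mp (hB hb)).resolve_left (fun h => haB (h ▸ hb))
            rw [Function.update_self]
            exact hx B (hBD'.trans hD'sub) hBcard
          · have ha'S : a' ∈ S.erase a := hC1sub (hD'sub ha')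
            have ha'ne : a' ≠ a := Finset.ne_of_mem_erase ha'S
            have haB : a ∉ B := by
              intro h
              have h1 : a' < a := hBlt a h
              have h2 : a ≤ a' := S.min'_le a' (Finset.mem_of_mem_erase ha'S)
              exact absurd (lt_of_le_of_lt h2 h1) (lt_irrefl a)
            have hBD' : B ⊆ D' := fun b hb =>
              (Finset.mem_insert.mp (hB hb)).resolve_left (fun h => haB (h ▸ hb))
            rw [Function.update_of_ne ha'ne]
            exact hkey a' ha' B hBD' hBcard hBlt
    obtain ⟨D, col, hDA, hDcard, hkey⟩ := H (c * (N - 1) + 1) A hA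
    obtain ⟨y, -, hy⟩ :=
      Finset.exists_lt_card_fiber_of_mul_lt_card_of_maps_to
        (s := D) (t := (Finset.univ : Finset (Fin c))) (f := col) (n := N - 1)
        (fun a _ => Finset.mem_univ _)
        (by rw [Finset.card_univ, Fintype.card_fin, hDcard]; omega)
    obtain ⟨C, hCsub, hCcard⟩ :=
      Finset.exists_subset_card_eq (s := D.filter fun a => col a = y) (n := N) (by omega)
    refine ⟨C, ?_, hCcard, y, ?_⟩
    · exact fun b hb => hDA (Finset.mem_filter.mp (hCsub hb)).1
    · intro B hBC hBcard
      have hBne : B.Nonempty := Finset.card_pos.mp (by omega)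
      set a := B.min' hBne with haMin
      have haB : a ∈ B := B.min'_mem hBne
      have haC : a ∈ C := hBC haB
      have hcol : col a = y := (Finset.mem_filter.mp (hCsub haC)).2
      have haD : a ∈ D := (Finset.mem_filter.mp (hCsub haC)).1
      have hBD : B.erase a ⊆ D := fun b hb =>
        (Finset.mem_filter.mp (hCsub (hBC (Finset.mem_of_mem_erase hb)))).1
      have hcase : (B.erase a).card = k := by
        rw [Finset.card_erase_of_mem haB, hBcard]
        omega
      have hlt : ∀ b ∈ B.erase a, a < b := fun b hb =>
        Finset.min'_lt_of_mem_erase_min' B hBne hb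
      have := hkey a haD (B.erase a) hBD hcase hlt
      rw [Finset.insert_erase haB] at this
      rw [this, hcol]

/-- Multipartite Ramsey theorem, auxiliary version with explicit induction on
the number of parts. -/
theorem ramsey_multi : ∀ (ν c : ℕ), 0 < c → ∀ (k N : Fin ν → ℕ),
    ∃ R : Fin ν → ℕ, (∀ i, 0 < R i) ∧
      ∀ (α : Type) (A : Fin ν → Finset α),
        (∀ i j, i ≠ j → Disjoint (A i) (A j)) →
        (∀ i, (A i).card = R i) →
        ∀ color : (Fin ν → Finset α) → Fin c,
          ∃ C : Fin ν → Finset α,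
            (∀ i, C i ⊆ A i ∧ (C i).card = N i) ∧
            ∃ x : Fin c, ∀ B : Fin ν → Finset α,
              (∀ i, B i ⊆ C i ∧ (B i).card = k i) → color B = x := by
  intro ν
  induction ν with
  | zero =>
    intro c hc k N
    refine ⟨fun i => i.elim0, fun i => i.elim0, ?_⟩
    intro α A _ _ color
    refine ⟨A, fun i => i.elim0, color (fun i => i.elim0), ?_⟩
    intro B _
    exact congrArg color (funext fun i => i.elim0)
  | succ ν ihv =>
    intro c hc k N
    classical
    obtain ⟨R', hR'pos, hR'⟩ := ihv c hc (fun i => k i.succ) (fun i => N i.succ)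
    have hc' : 0 < c ^ (∏ i : Fin ν, 2 ^ R' i) := pow_pos hc _
    obtain ⟨R₀, hR₀⟩ := ramsey_one (k 0) (c ^ (∏ i : Fin ν, 2 ^ R' i)) (N 0) hc'
    refine ⟨Fin.cons (max R₀ 1) R', ?_, ?_⟩
    · intro i
      refine Fin.cases ?_ ?_ i
      · simp
      · intro j
        simpa using hR'pos j
    intro α A hdisj hcard color
    have hT : Fintype.card ((∀ i : Fin ν, ↥((A i.succ).powerset)) → Fin c)
        = c ^ (∏ i : Fin ν, 2 ^ R' i) := by
      rw [Fintype.card_fun, Fintype.card_fin]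
      congr 1
      rw [Fintype.card_pi]
      refine Finset.prod_congr rfl ?_
      intro i _
      rw [Fintype.card_coe, Finset.card_powerset, hcard i.succ, Fin.cons_succ]
    let e : ((∀ i : Fin ν, ↥((A i.succ).powerset)) → Fin c)
        ≃ Fin (c ^ (∏ i : Fin ν, 2 ^ R' i)) := Fintype.equivFinOfCardEq hT
    have h0card : R₀ ≤ (A 0).card := by
      rw [hcard 0, Fin.cons_zero]
      exact le_max_left _ _
    obtain ⟨C₀, hC₀A, hC₀card, x₀, hx₀⟩ := hR₀ α (A 0) h0card
      (fun B => e (fun t => color (Fin.cons B (fun i => (t i).1))))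
    set F : (∀ i : Fin ν, ↥((A i.succ).powerset)) → Fin c := e.symm x₀ with hFdef
    have hgF : ∀ B : Finset α, B ⊆ C₀ → B.card = k 0 →
        ∀ t : ∀ i : Fin ν, ↥((A i.succ).powerset),
          color (Fin.cons B (fun i => (t i).1)) = F t := by
      intro B hB hBc t
      have h := hx₀ B hB hBc
      calc color (Fin.cons B (fun i => (t i).1))
          = (fun t : ∀ i : Fin ν, ↥((A i.succ).powerset) =>
              color (Fin.cons B (fun i => (t i).1))) t := rfl
        _ = F t := by
            rw [hFdef, ← h, Equiv.symm_apply_apply]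
    obtain ⟨C', hC', x₁, hx₁⟩ := hR' α (fun i => A i.succ)
      (fun i j hij => hdisj i.succ j.succ (fun h => hij (Fin.succ_injective _ h)))
      (fun i => by rw [hcard i.succ, Fin.cons_succ])
      (fun B' => F (fun i =>
        ⟨B' i ∩ A i.succ, Finset.mem_powerset.mpr Finset.inter_subset_right⟩))
    refine ⟨Fin.cons C₀ C', ?_, x₁, ?_⟩
    · intro i
      refine Fin.cases ?_ ?_ i
      · rw [Fin.cons_zero]
        exact ⟨hC₀A, hC₀card⟩
      · intro j
        rw [Fin.cons_succ]
        exact hC' j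
    · intro B hB
      have hB0 : B 0 ⊆ C₀ := by have h := (hB 0).1; rwa [Fin.cons_zero] at h
      have hB0c : (B 0).card = k 0 := (hB 0).2
      have hBs : ∀ i : Fin ν, B i.succ ⊆ C' i := fun i => by
        have h := (hB i.succ).1; rwa [Fin.cons_succ] at h
      have hBsc : ∀ i : Fin ν, (B i.succ).card = k i.succ := fun i => (hB i.succ).2
      have hBtail : ∀ i : Fin ν, B i.succ ⊆ A i.succ := fun i =>
        (hBs i).trans (hC' i).1
      have hdecomp : B = Fin.cons (B 0) (fun i => B i.succ) := by
        funext i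
        refine Fin.cases ?_ ?_ i
        · rw [Fin.cons_zero]
        · intro j
          rw [Fin.cons_succ]
      have key : color (Fin.cons (B 0) (fun i => B i.succ))
          = F (fun i => ⟨B i.succ, Finset.mem_powerset.mpr (hBtail i)⟩) :=
        hgF (B 0) hB0 hB0c (fun i => ⟨B i.succ, Finset.mem_powerset.mpr (hBtail i)⟩)
      have key2 : F (fun i =>
          ⟨B i.succ ∩ A i.succ, Finset.mem_powerset.mpr Finset.inter_subset_right⟩) = x₁ :=
        hx₁ (fun i => B i.succ) (fun i => ⟨hBs i, hBsc i⟩)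
      rw [hdecomp, key, ← key2]
      congr 1
      funext i
      exact Subtype.ext (Finset.inter_eq_left.mpr (hBtail i)).symm

/-- Multipartite Ramsey theorem: given `c` colors and sizes `k i`, `N i`, there
are `R i` so that for any pairwise disjoint finite sets `A i` of cardinality
`R i` and any `c`-coloring of tuples `(B₁,…,B_ν)` with `B i ⊆ A i`, `|B i| = k i`,
there exist `C i ⊆ A i` with `|C i| = N i` such that all such tuples with
`B i ⊆ C i` receive the same color. -/
theorem stmt1 (c ν : ℕ) (hc : 0 < c) (k N : Fin ν → ℕ)
    (hk : ∀ i, 0 < k i) (hN : ∀ i, 0 < N i) :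
    ∃ R : Fin ν → ℕ, (∀ i, 0 < R i) ∧
      ∀ (α : Type) (A : Fin ν → Finset α),
        (∀ i j, i ≠ j → Disjoint (A i) (A j)) →
        (∀ i, (A i).card = R i) →
        ∀ color : (Fin ν → Finset α) → Fin c,
          ∃ C : Fin ν → Finset α,
            (∀ i, C i ⊆ A i ∧ (C i).card = N i) ∧
            ∃ x : Fin c, ∀ B : Fin ν → Finset α,
              (∀ i, B i ⊆ C i ∧ (B i).card = k i) → color B = x := by
  exact ramsey_multi ν c hc k N
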